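/- The Fock-majorization ladder holds for the composed loss-amplifier kernel: for any η ∈ [0,1] and t ∈ [0,1), the kernel M(i,n) obtained by composing the binomial kernel B(i,m) = C(i,m) η^m (1-η)^{i-m} with the shifted negative-binomial kernel A(m,n) = C(n, n−m) t^{n−m} (1-t)^{m+1} (for n ≥ m, zero otherwise) satisfies: ∀ k, n, Σ_{j=0}^n M(k,j) ≥ Σ_{j=0}^n M(k+1,j). -/

import Mathlib

open scoped BigOperators

noncomputable def ampS (t : ℝ) (m n : ℕ) : ℝ :=
  ∑ j ∈ Finset.range (n + 1),
    (if m ≤ j then (j.choose (j - m) : ℝ) * t ^ (j - m) * (1 - t) ^ (m + 1) else 0)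

lemma ampS_diff (t : ℝ) (m n : ℕ) :
    ampS t m n = ampS t (m + 1) n
      + ((n + 1).choose (m + 1) : ℝ) * t ^ (n - m) * (1 - t) ^ (m + 1) := by
  induction n with
  | zero =>
      rcases Nat.eq_zero_or_pos m with h | h
      · subst h; simp [ampS]
      · simp only [ampS, zero_add, Finset.sum_range_one]
        rw [if_neg (by omega), if_neg (by omega),
          Nat.choose_eq_zero_of_lt (by omega)]
        simp
  | succ n ih =>
      have unfold1 : ampS t m (n + 1) = ampS t m n
          + (if m ≤ n + 1 then ((n+1).choose (n+1-m) : ℝ) * t ^ (n+1-m) * (1-t) ^ (m+1) else 0) := by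
        rw [ampS, ampS, Finset.sum_range_succ]
      have unfold2 : ampS t (m+1) (n + 1) = ampS t (m+1) n
          + (if m + 1 ≤ n + 1 then ((n+1).choose (n+1-(m+1)) : ℝ) * t ^ (n+1-(m+1)) * (1-t) ^ (m+1+1) else 0) := by
        rw [ampS, ampS, Finset.sum_range_succ]
      rw [unfold1, unfold2, ih]
      rcases lt_trichotomy m (n + 1) with h | h | h
      · rw [if_pos (by omega), if_pos (by omega)]
        have e1 : n + 1 - m = (n - m) + 1 := by omega
        have e2 : n + 1 - (m + 1) = n - m := by omega
        have c1 : (n + 1).choose (n + 1 - m) = (n + 1).choose m := by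
          rw [Nat.choose_symm (by omega)]
        have c2 : (n + 1).choose (n + 1 - (m + 1)) = (n + 1).choose (m + 1) := by
          rw [Nat.choose_symm (by omega)]
        have c3 : (n + 2).choose (m + 1) = (n + 1).choose m + (n + 1).choose (m + 1) :=
          Nat.choose_succ_succ _ _
        rw [c1, c2, c3, e1, e2, pow_succ]
        push_cast
        ring
      · subst h
        rw [if_pos le_rfl, if_neg (by omega), Nat.choose_eq_zero_of_lt (by omega),
          Nat.sub_eq_zero_of_le (by omega), Nat.sub_self]
        simp
      · rw [if_neg (by omega), if_neg (by omega),
          Nat.choose_eq_zero_of_lt (by omega), Nat.choose_eq_zero_of_lt (by omega)]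
        simp

lemma ampS_ladder (t : ℝ) (ht0 : 0 ≤ t) (ht1 : t < 1) (m n : ℕ) :
    ampS t (m + 1) n ≤ ampS t m n := by
  rw [ampS_diff t m n]
  have h1t : (0:ℝ) ≤ 1 - t := by linarith
  have : 0 ≤ ((n + 1).choose (m + 1) : ℝ) * t ^ (n - m) * (1 - t) ^ (m + 1) :=
    mul_nonneg (mul_nonneg (Nat.cast_nonneg _) (pow_nonneg ht0 _)) (pow_nonneg h1t _)
  linarith

theorem composed_loss_amplifier_ladder
    (η t : ℝ) (hη0 : 0 ≤ η) (hη1 : η ≤ 1) (ht0 : 0 ≤ t) (ht1 : t < 1) :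
    ∀ k n : ℕ,
      ∑ j ∈ Finset.range (n + 1),
          (∑ m ∈ Finset.range (k + 2),
            (((k + 1).choose m : ℝ) * η ^ m * (1 - η) ^ (k + 1 - m)) *
              (if m ≤ j then (j.choose (j - m) : ℝ) * t ^ (j - m) * (1 - t) ^ (m + 1) else 0))
        ≤ ∑ j ∈ Finset.range (n + 1),
          (∑ m ∈ Finset.range (k + 1),
            ((k.choose m : ℝ) * η ^ m * (1 - η) ^ (k - m)) *
              (if m ≤ j then (j.choose (j - m) : ℝ) * t ^ (j - m) * (1 - t) ^ (m + 1) else 0)) := by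
  intro k n
  have hcommL :
      (∑ j ∈ Finset.range (n + 1), ∑ m ∈ Finset.range (k + 2),
        (((k + 1).choose m : ℝ) * η ^ m * (1 - η) ^ (k + 1 - m)) *
          (if m ≤ j then (j.choose (j - m) : ℝ) * t ^ (j - m) * (1 - t) ^ (m + 1) else 0))
      = ∑ m ∈ Finset.range (k + 2), ∑ j ∈ Finset.range (n + 1),
          (((k + 1).choose m : ℝ) * η ^ m * (1 - η) ^ (k + 1 - m)) *
            (if m ≤ j then (j.choose (j - m) : ℝ) * t ^ (j - m) * (1 - t) ^ (m + 1) else 0) :=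
    Finset.sum_comm
  have hcommR :
      (∑ j ∈ Finset.range (n + 1), ∑ m ∈ Finset.range (k + 1),
        ((k.choose m : ℝ) * η ^ m * (1 - η) ^ (k - m)) *
          (if m ≤ j then (j.choose (j - m) : ℝ) * t ^ (j - m) * (1 - t) ^ (m + 1) else 0))
      = ∑ m ∈ Finset.range (k + 1), ∑ j ∈ Finset.range (n + 1),
          ((k.choose m : ℝ) * η ^ m * (1 - η) ^ (k - m)) *
            (if m ≤ j then (j.choose (j - m) : ℝ) * t ^ (j - m) * (1 - t) ^ (m + 1) else 0) :=
    Finset.sum_comm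
  rw [hcommL, hcommR]
  have hLHS :
      (∑ m ∈ Finset.range (k + 2), ∑ j ∈ Finset.range (n + 1),
        (((k + 1).choose m : ℝ) * η ^ m * (1 - η) ^ (k + 1 - m)) *
          (if m ≤ j then (j.choose (j - m) : ℝ) * t ^ (j - m) * (1 - t) ^ (m + 1) else 0))
      = ∑ m ∈ Finset.range (k + 2),
          (((k + 1).choose m : ℝ) * η ^ m * (1 - η) ^ (k + 1 - m)) * ampS t m n := by
    refine Finset.sum_congr rfl fun m _ => ?_
    rw [ampS, Finset.mul_sum]
  have hRHS :
      (∑ m ∈ Finset.range (k + 1), ∑ j ∈ Finset.range (n + 1),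
        ((k.choose m : ℝ) * η ^ m * (1 - η) ^ (k - m)) *
          (if m ≤ j then (j.choose (j - m) : ℝ) * t ^ (j - m) * (1 - t) ^ (m + 1) else 0))
      = ∑ m ∈ Finset.range (k + 1),
          ((k.choose m : ℝ) * η ^ m * (1 - η) ^ (k - m)) * ampS t m n := by
    refine Finset.sum_congr rfl fun m _ => ?_
    rw [ampS, Finset.mul_sum]
  rw [hLHS, hRHS]
  -- decompose LHS via Pascal
  have key :
      (∑ m ∈ Finset.range (k + 2),
          (((k + 1).choose m : ℝ) * η ^ m * (1 - η) ^ (k + 1 - m)) * ampS t m n)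
      = ∑ m ∈ Finset.range (k + 1),
          ((k.choose m : ℝ) * η ^ m * (1 - η) ^ (k - m)) *
            (η * ampS t (m + 1) n + (1 - η) * ampS t m n) := by
    rw [Finset.sum_range_succ']
    have step1 : ∀ m ∈ Finset.range (k + 1),
        (((k + 1).choose (m + 1) : ℝ) * η ^ (m + 1) * (1 - η) ^ (k + 1 - (m + 1))) *
            ampS t (m + 1) n
        = ((k.choose m : ℝ) * η ^ m * (1 - η) ^ (k - m)) * (η * ampS t (m + 1) n)
          + ((k.choose (m + 1) : ℝ) * η ^ (m + 1) * (1 - η) ^ (k - m)) * ampS t (m + 1) n := by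
      intro m hm
      have : (k + 1).choose (m + 1) = k.choose m + k.choose (m + 1) :=
        Nat.choose_succ_succ _ _
      rw [this]
      have e : k + 1 - (m + 1) = k - m := by omega
      rw [e]
      push_cast
      ring
    rw [Finset.sum_congr rfl step1, Finset.sum_add_distrib]
    -- second piece: shift index back
    have shift :
        (∑ m ∈ Finset.range (k + 1),
            ((k.choose (m + 1) : ℝ) * η ^ (m + 1) * (1 - η) ^ (k - m)) * ampS t (m + 1) n)
        = ∑ m ∈ Finset.range (k + 1),
            ((k.choose m : ℝ) * η ^ m * (1 - η) ^ (k + 1 - m)) * ampS t m n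
          - ((k.choose 0 : ℝ) * η ^ 0 * (1 - η) ^ (k + 1)) * ampS t 0 n := by
      have h2 :
          (∑ m ∈ Finset.range (k + 2),
              ((k.choose m : ℝ) * η ^ m * (1 - η) ^ (k + 1 - m)) * ampS t m n)
          = (∑ m ∈ Finset.range (k + 1),
              ((k.choose (m + 1) : ℝ) * η ^ (m + 1) * (1 - η) ^ (k + 1 - (m + 1))) *
                ampS t (m + 1) n)
            + ((k.choose 0 : ℝ) * η ^ 0 * (1 - η) ^ (k + 1 - 0)) * ampS t 0 n :=
        Finset.sum_range_succ' _ _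
      have h3 :
          (∑ m ∈ Finset.range (k + 2),
              ((k.choose m : ℝ) * η ^ m * (1 - η) ^ (k + 1 - m)) * ampS t m n)
          = ∑ m ∈ Finset.range (k + 1),
              ((k.choose m : ℝ) * η ^ m * (1 - η) ^ (k + 1 - m)) * ampS t m n := by
        rw [Finset.sum_range_succ, Nat.choose_eq_zero_of_lt (by omega)]
        simp
      have h4 : ∀ m ∈ Finset.range (k + 1),
          ((k.choose (m + 1) : ℝ) * η ^ (m + 1) * (1 - η) ^ (k + 1 - (m + 1))) *
              ampS t (m + 1) n
          = ((k.choose (m + 1) : ℝ) * η ^ (m + 1) * (1 - η) ^ (k - m)) * ampS t (m + 1) n := by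
        intro m hm
        have e : k + 1 - (m + 1) = k - m := by omega
        rw [e]
      rw [Finset.sum_congr rfl h4] at h2
      rw [h3] at h2
      simp only [Nat.sub_zero] at h2
      linarith [h2]
    rw [shift]
    have outer : ∀ m ∈ Finset.range (k + 1),
        ((k.choose m : ℝ) * η ^ m * (1 - η) ^ (k + 1 - m)) * ampS t m n
        = ((k.choose m : ℝ) * η ^ m * (1 - η) ^ (k - m)) * ((1 - η) * ampS t m n) := by
      intro m hm
      simp only [Finset.mem_range] at hm
      have e : k + 1 - m = (k - m) + 1 := by omega
      rw [e, pow_succ]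
      ring
    have final : ∀ m ∈ Finset.range (k + 1),
        ((k.choose m : ℝ) * η ^ m * (1 - η) ^ (k - m)) * (η * ampS t (m + 1) n)
          + ((k.choose m : ℝ) * η ^ m * (1 - η) ^ (k - m)) * ((1 - η) * ampS t m n)
        = ((k.choose m : ℝ) * η ^ m * (1 - η) ^ (k - m)) *
            (η * ampS t (m + 1) n + (1 - η) * ampS t m n) := by
      intro m _; ring
    rw [Finset.sum_congr rfl outer]
    rw [← Finset.sum_congr rfl final, Finset.sum_add_distrib]
    simp only [Nat.choose_zero_right, Nat.cast_one, pow_zero, one_mul, Nat.sub_zero]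
    ring
  rw [key]
  refine Finset.sum_le_sum fun m hm => ?_
  have hS := ampS_ladder t ht0 ht1 m n
  have h1 : (0 : ℝ) ≤ (k.choose m : ℝ) * η ^ m * (1 - η) ^ (k - m) := by
    have : (0:ℝ) ≤ 1 - η := by linarith
    positivity
  have h2 : η * ampS t (m + 1) n + (1 - η) * ampS t m n ≤ ampS t m n := by
    nlinarith
  nlinarith [mul_le_mul_of_nonneg_left h2 h1]
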